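/- Assume the Calogero–Degasperis kernel condition L₊ⁿ(r,q)ᵀ = L₋ⁿ(r,q)ᵀ for every n ≥ 0. Then for every n ≥ 0: (i) (L₋+L₊)ⁿ(r,q)ᵀ = 2ⁿ·L₊ⁿ(r,q)ᵀ; and (ii) with R = σ(L₋+L₊)σ⁻¹ where σ = [0,1;−1,0], J = Diag(−i,i), and H = −∫ r q dx (so that J∇H = (−iq, ir)ᵀ), one has RⁿJ∇H = 2ⁿσ₂L₊ⁿ(r,q)ᵀ with σ₂ = [0,−i; i,0]; equivalently, the flow ((q,r)ᵀ)_t = RⁿJ∇H can be rewritten in the Calogero–Degasperis form ((−r,q)ᵀ)_t = −2ⁿ·i·L₊ⁿ(r,q)ᵀ. Hence the NLS hierarchy generated by the recursion operator R is a sub-hierarchy of the Calogero–Degasperis family of flows. -/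
import Mathlib


/- STATEMENT 1: assuming the Calogero–Degasperis kernel condition
L₊ⁿ(r,q)ᵀ = L₋ⁿ(r,q)ᵀ for all n, one has (i) (L₋+L₊)ⁿ(r,q)ᵀ = 2ⁿ L₊ⁿ(r,q)ᵀ, and
(ii) Rⁿ J∇H = 2ⁿ σ₂ L₊ⁿ(r,q)ᵀ for R = σ(L₋+L₊)σ⁻¹ and J∇H = (−iq, ir)ᵀ;
equivalently (iii) the flow (q,r)ᵀ_t = RⁿJ∇H takes the Calogero–Degasperis form
((−r,q)ᵀ)_t = −2ⁿ·i·L₊ⁿ(r,q)ᵀ.  Hence the NLS hierarchy generated by R is a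
sub-hierarchy of the Calogero–Degasperis family. -/

open MeasureTheory Complex

noncomputable section

abbrev F2 : Type := (ℝ → ℂ) × (ℝ → ℂ)

/-- I₊ f (x) = ∫_x^∞ f -/
def Ipl (f : ℝ → ℂ) (x : ℝ) : ℂ := ∫ y in Set.Ioi x, f y

/-- I₋ f (x) = ∫_{−∞}^x f -/
def Imi (f : ℝ → ℂ) (x : ℝ) : ℂ := ∫ y in Set.Iic x, f y

/-- L₊ = (1/2i)[σ₃∂ₓ + 2[rI₊q, −rI₊r; qI₊q, −qI₊r]] -/
def Lplus (q r : ℝ → ℂ) (u : F2) : F2 :=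
  (fun x => (1 / (2 * I)) * (deriv u.1 x
      + 2 * (r x * Ipl (fun y => q y * u.1 y) x - r x * Ipl (fun y => r y * u.2 y) x)),
   fun x => (1 / (2 * I)) * (-(deriv u.2 x)
      + 2 * (q x * Ipl (fun y => q y * u.1 y) x - q x * Ipl (fun y => r y * u.2 y) x)))

/-- L₋ = (1/2i)[σ₃∂ₓ − 2[rI₋q, −rI₋r; qI₋q, −qI₋r]] -/
def Lminus (q r : ℝ → ℂ) (u : F2) : F2 :=
  (fun x => (1 / (2 * I)) * (deriv u.1 x
      - 2 * (r x * Imi (fun y => q y * u.1 y) x - r x * Imi (fun y => r y * u.2 y) x)),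
   fun x => (1 / (2 * I)) * (-(deriv u.2 x)
      - 2 * (q x * Imi (fun y => q y * u.1 y) x - q x * Imi (fun y => r y * u.2 y) x)))

/-- σ = [0,1;−1,0] -/
def sigmaMap (u : F2) : F2 := (u.2, fun x => -(u.1 x))

/-- σ⁻¹ = [0,−1;1,0] -/
def sigmaInv (u : F2) : F2 := (fun x => -(u.2 x), u.1)

/-- the Pauli matrix σ₂ = [0,−i; i,0] -/
def sigma2 (u : F2) : F2 := (fun x => -I * u.2 x, fun x => I * u.1 x)

/-- the recursion operator R = σ(L₋+L₊)σ⁻¹ -/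
def Rop (q r : ℝ → ℂ) (u : F2) : F2 :=
  sigmaMap (Lminus q r (sigmaInv u) + Lplus q r (sigmaInv u))

lemma Ipl_const_mul (c : ℂ) (f : ℝ → ℂ) (x : ℝ) :
    Ipl (fun y => c * f y) x = c * Ipl f x := by
  simp only [Ipl, ← smul_eq_mul, integral_smul]

lemma Imi_const_mul (c : ℂ) (f : ℝ → ℂ) (x : ℝ) :
    Imi (fun y => c * f y) x = c * Imi f x := by
  simp only [Imi, ← smul_eq_mul, integral_smul]

lemma Lplus_smul (q r : ℝ → ℂ) (c : ℂ) (u : F2) :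
    Lplus q r (c • u) = c • Lplus q r u := by
  have h1 : ∀ f : ℝ → ℂ, (c • f) = fun x => c * f x := fun f => rfl
  unfold Lplus
  refine Prod.ext ?_ ?_ <;> funext x <;>
  · simp only [Prod.smul_fst, Prod.smul_snd, h1, deriv_const_mul_field,
      Pi.smul_apply, smul_eq_mul]
    rw [show (fun y => q y * (c * u.1 y)) = fun y => c * (q y * u.1 y) by funext y; ring,
        show (fun y => r y * (c * u.2 y)) = fun y => c * (r y * u.2 y) by funext y; ring,
        Ipl_const_mul, Ipl_const_mul]
    ring

lemma Lminus_smul (q r : ℝ → ℂ) (c : ℂ) (u : F2) :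
    Lminus q r (c • u) = c • Lminus q r u := by
  have h1 : ∀ f : ℝ → ℂ, (c • f) = fun x => c * f x := fun f => rfl
  unfold Lminus
  refine Prod.ext ?_ ?_ <;> funext x <;>
  · simp only [Prod.smul_fst, Prod.smul_snd, h1, deriv_const_mul_field,
      Pi.smul_apply, smul_eq_mul]
    rw [show (fun y => q y * (c * u.1 y)) = fun y => c * (q y * u.1 y) by funext y; ring,
        show (fun y => r y * (c * u.2 y)) = fun y => c * (r y * u.2 y) by funext y; ring,
        Imi_const_mul, Imi_const_mul]
    ring

lemma sum_smul' (q r : ℝ → ℂ) (c : ℂ) (u : F2) :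
    Lminus q r (c • u) + Lplus q r (c • u) = c • (Lminus q r u + Lplus q r u) := by
  rw [Lplus_smul, Lminus_smul, smul_add]

lemma sum_iter_smul (q r : ℝ → ℂ) (c : ℂ) (u : F2) (n : ℕ) :
    (fun u => Lminus q r u + Lplus q r u)^[n] (c • u)
      = c • (fun u => Lminus q r u + Lplus q r u)^[n] u := by
  induction n generalizing u with
  | zero => rfl
  | succ n ih => rw [Function.iterate_succ_apply, Function.iterate_succ_apply, sum_smul', ih]

lemma sigmaInv_sigmaMap (u : F2) : sigmaInv (sigmaMap u) = u := by
  refine Prod.ext ?_ rfl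
  funext x; simp [sigmaInv, sigmaMap]

lemma Rop_iter_sigma (q r : ℝ → ℂ) (u : F2) (n : ℕ) :
    (Rop q r)^[n] (sigmaMap u)
      = sigmaMap ((fun u => Lminus q r u + Lplus q r u)^[n] u) := by
  induction n generalizing u with
  | zero => rfl
  | succ n ih =>
      rw [Function.iterate_succ_apply, Function.iterate_succ_apply]
      rw [show Rop q r (sigmaMap u)
            = sigmaMap (Lminus q r u + Lplus q r u) by rw [Rop, sigmaInv_sigmaMap], ih]

lemma sigmaMap_smul (c : ℂ) (u : F2) : sigmaMap (c • u) = c • sigmaMap u := by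
  refine Prod.ext rfl ?_
  funext x
  simp [sigmaMap, Pi.smul_apply, smul_eq_mul, mul_neg]

lemma sigma2_eq (u : F2) : sigma2 u = (-I : ℂ) • sigmaMap u := by
  refine Prod.ext ?_ ?_ <;> funext x <;>
    simp [sigma2, sigmaMap, Pi.smul_apply, smul_eq_mul] <;> ring

theorem NLS_hierarchy_is_CalogeroDegasperis_subhierarchy
    (q r : SchwartzMap ℝ ℂ)
    (hker : ∀ n : ℕ, (Lplus (⇑q) (⇑r))^[n] (⇑r, ⇑q) = (Lminus (⇑q) (⇑r))^[n] (⇑r, ⇑q)) :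
    -- (i)
    (∀ n : ℕ, (fun u => Lminus (⇑q) (⇑r) u + Lplus (⇑q) (⇑r) u)^[n] (⇑r, ⇑q)
        = (2 ^ n : ℂ) • (Lplus (⇑q) (⇑r))^[n] (⇑r, ⇑q)) ∧
    -- (ii)  Rⁿ J∇H = 2ⁿ σ₂ L₊ⁿ(r,q)  with J∇H = (−iq, ir)
    (∀ n : ℕ, (Rop (⇑q) (⇑r))^[n] (fun x => -I * q x, fun x => I * r x)
        = (2 ^ n : ℂ) • sigma2 ((Lplus (⇑q) (⇑r))^[n] (⇑r, ⇑q))) ∧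
    -- (iii)  with (q_t, r_t) = RⁿJ∇H one has (−r_t, q_t) = −2ⁿ i L₊ⁿ(r,q)
    (∀ n : ℕ,
      ((fun x => -(((Rop (⇑q) (⇑r))^[n] (fun x => -I * q x, fun x => I * r x)).2 x),
        ((Rop (⇑q) (⇑r))^[n] (fun x => -I * q x, fun x => I * r x)).1) : F2)
        = (-(2 ^ n) * I : ℂ) • (Lplus (⇑q) (⇑r))^[n] (⇑r, ⇑q)) := by
  have hLm : ∀ n : ℕ, Lminus (⇑q) (⇑r) ((Lplus (⇑q) (⇑r))^[n] (⇑r, ⇑q))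
      = (Lplus (⇑q) (⇑r))^[n+1] (⇑r, ⇑q) := by
    intro n
    rw [hker n, hker (n+1)]
    exact (Function.iterate_succ_apply' _ _ _).symm
  have hi : ∀ n : ℕ, (fun u => Lminus (⇑q) (⇑r) u + Lplus (⇑q) (⇑r) u)^[n] (⇑r, ⇑q)
      = (2 ^ n : ℂ) • (Lplus (⇑q) (⇑r))^[n] (⇑r, ⇑q) := by
    intro n
    induction n with
    | zero => simp
    | succ n ih =>
        rw [Function.iterate_succ_apply', ih]
        show Lminus _ _ _ + Lplus _ _ _ = _
        have h2 : Lplus (⇑q) (⇑r) ((Lplus (⇑q) (⇑r))^[n] (⇑r, ⇑q))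
            = (Lplus (⇑q) (⇑r))^[n+1] (⇑r, ⇑q) :=
          (Function.iterate_succ_apply' _ _ _).symm
        rw [Lminus_smul, Lplus_smul, ← smul_add, hLm n, h2, ← two_smul ℂ, smul_smul]
        congr 1
        try push_cast
        try ring
  have harg : ((fun x => -I * q x, fun x => I * r x) : F2)
      = sigmaMap ((-I : ℂ) • ((⇑r, ⇑q) : F2)) := by
    refine Prod.ext ?_ ?_ <;> funext x <;>
      simp [sigmaMap, Pi.smul_apply, smul_eq_mul] <;> ring
  have hii : ∀ n : ℕ, (Rop (⇑q) (⇑r))^[n] (fun x => -I * q x, fun x => I * r x)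
      = (2 ^ n : ℂ) • sigma2 ((Lplus (⇑q) (⇑r))^[n] (⇑r, ⇑q)) := by
    intro n
    rw [harg, Rop_iter_sigma, sum_iter_smul, hi n, sigma2_eq]
    simp only [sigmaMap_smul, smul_smul]
    congr 1
    ring
  refine ⟨hi, hii, ?_⟩
  intro n
  rw [hii n]
  set w := (Lplus (⇑q) (⇑r))^[n] (⇑r, ⇑q) with hw
  refine Prod.ext ?_ ?_ <;> funext x <;>
    simp [sigma2, Pi.smul_apply, smul_eq_mul] <;> ring

end
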